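/- Let n, p be positive integers, A a real n×n matrix, B₁, B₂ real n×p matrices, and 0 < h < T reals. Set B = B₁ + exp(−h·A)·B₂ and G_T = ∫_0^{T−h} exp((T−t)A)·B·Bᵀ·exp((T−t)Aᵀ) dt + ∫_{T−h}^{T} exp((T−t)A)·B₁·B₁ᵀ·exp((T−t)Aᵀ) dt. Suppose G_T is invertible. For y ∈ ℝⁿ define u : ℝ → ℝᵖ by u(t) = Bᵀ·exp((T−t)Aᵀ)·G_T⁻¹·y for t ∈ [0, T−h] and u(t) = B₁ᵀ·exp((T−t)Aᵀ)·G_T⁻¹·y for t ∈ (T−h, T]. Then ∫_0^{T−h} exp((T−t)A)·B·u(t) dt + ∫_{T−h}^{T} exp((T−t)A)·B₁·u(t) dt = y. -/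

import Mathlib

open Matrix MeasureTheory intervalIntegral

attribute [local instance] Matrix.linftyOpNormedAddCommGroup Matrix.linftyOpNormedSpace
attribute [local instance] Matrix.linftyOpNormedRing Matrix.linftyOpNormedAlgebra

/-- `M ↦ M.mulVec v` as a continuous linear map. -/
noncomputable def mulVecCLM {n : ℕ} (v : Fin n → ℝ) :
    Matrix (Fin n) (Fin n) ℝ →L[ℝ] (Fin n → ℝ) :=
  LinearMap.toContinuousLinearMap
    { toFun := fun M => M.mulVec v
      map_add' := fun M N => Matrix.add_mulVec M N v
      map_smul' := fun c M => Matrix.smul_mulVec c M v }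

set_option maxHeartbeats 1000000 in
/-- The adjoint-based steering control `u = L* G_T⁻¹ y` steers the delay system to `y`:
with `u(t) = Bᵀ e^{(T-t)Aᵀ} G_T⁻¹ y` on `[0, T-h]` and `u(t) = B₁ᵀ e^{(T-t)Aᵀ} G_T⁻¹ y`
on `(T-h, T]`, one has `L u = y`, provided the Gramian `G_T` is invertible. -/
theorem delay_steering_control
    {n p : ℕ} (hn : 0 < n) (hp : 0 < p)
    (A : Matrix (Fin n) (Fin n) ℝ) (B₁ B₂ : Matrix (Fin n) (Fin p) ℝ)
    (h T : ℝ) (hh : 0 < h) (hhT : h < T)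
    (B : Matrix (Fin n) (Fin p) ℝ) (hB : B = B₁ + NormedSpace.exp ((-h) • A) * B₂)
    (G : Matrix (Fin n) (Fin n) ℝ)
    (hG : G = (∫ t in (0:ℝ)..(T - h),
          NormedSpace.exp ((T - t) • A) * B * Bᵀ * NormedSpace.exp ((T - t) • Aᵀ))
        + ∫ t in (T - h)..T,
          NormedSpace.exp ((T - t) • A) * B₁ * B₁ᵀ * NormedSpace.exp ((T - t) • Aᵀ))
    (hGunit : IsUnit G)
    (y : Fin n → ℝ) (u : ℝ → Fin p → ℝ)
    (hu₁ : ∀ t ∈ Set.Icc (0:ℝ) (T - h),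
      u t = Bᵀ.mulVec ((NormedSpace.exp ((T - t) • Aᵀ)).mulVec (G⁻¹.mulVec y)))
    (hu₂ : ∀ t ∈ Set.Ioc (T - h) T,
      u t = B₁ᵀ.mulVec ((NormedSpace.exp ((T - t) • Aᵀ)).mulVec (G⁻¹.mulVec y))) :
    (∫ t in (0:ℝ)..(T - h), (NormedSpace.exp ((T - t) • A) * B).mulVec (u t))
      + (∫ t in (T - h)..T, (NormedSpace.exp ((T - t) • A) * B₁).mulVec (u t)) = y := by
  set v : Fin n → ℝ := G⁻¹.mulVec y with hv
  have h0Th : (0:ℝ) ≤ T - h := by linarith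
  have hThT : T - h ≤ T := by linarith
  -- continuity of the matrix integrands
  have hcont : ∀ C : Matrix (Fin n) (Fin p) ℝ, Continuous fun t : ℝ =>
      NormedSpace.exp ((T - t) • A) * C * Cᵀ * NormedSpace.exp ((T - t) • Aᵀ) := by
    intro C
    have h1 : Continuous fun t : ℝ => NormedSpace.exp ((T - t) • A) :=
      NormedSpace.exp_continuous.comp (by fun_prop)
    have h2 : Continuous fun t : ℝ => NormedSpace.exp ((T - t) • Aᵀ) :=
      NormedSpace.exp_continuous.comp (by fun_prop)
    exact ((h1.matrix_mul continuous_const).matrix_mul continuous_const).matrix_mul h2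
  letI : ENormedAddMonoid (Matrix (Fin n) (Fin n) ℝ) :=
    (@NormedAddCommGroup.toENormedAddCommMonoid _ Matrix.linftyOpNormedAddCommGroup).toENormedAddMonoid
  have hint : ∀ (C : Matrix (Fin n) (Fin p) ℝ) (a b : ℝ), IntervalIntegrable
      (fun t : ℝ => NormedSpace.exp ((T - t) • A) * C * Cᵀ * NormedSpace.exp ((T - t) • Aᵀ))
      volume a b :=
    fun C a b => (hcont C).intervalIntegrable a b
  have key : ∀ (C : Matrix (Fin n) (Fin p) ℝ) (a b : ℝ),
      (∫ t in a..b,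
          (NormedSpace.exp ((T - t) • A) * C * Cᵀ * NormedSpace.exp ((T - t) • Aᵀ)).mulVec v)
        = (∫ t in a..b,
            NormedSpace.exp ((T - t) • A) * C * Cᵀ * NormedSpace.exp ((T - t) • Aᵀ)).mulVec v := by
    intro C a b
    exact ((mulVecCLM v).intervalIntegral_comp_comm (hint C a b))
  have e1 : (∫ t in (0:ℝ)..(T - h), (NormedSpace.exp ((T - t) • A) * B).mulVec (u t))
      = (∫ t in (0:ℝ)..(T - h),
          NormedSpace.exp ((T - t) • A) * B * Bᵀ * NormedSpace.exp ((T - t) • Aᵀ)).mulVec v := by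
    rw [← key B]
    apply intervalIntegral.integral_congr
    intro t ht
    rw [Set.uIcc_of_le h0Th] at ht
    simp only [hu₁ t ht, Matrix.mulVec_mulVec, Matrix.mul_assoc]
  have e2 : (∫ t in (T - h)..T, (NormedSpace.exp ((T - t) • A) * B₁).mulVec (u t))
      = (∫ t in (T - h)..T,
          NormedSpace.exp ((T - t) • A) * B₁ * B₁ᵀ * NormedSpace.exp ((T - t) • Aᵀ)).mulVec v := by
    rw [← key B₁]
    apply intervalIntegral.integral_congr_ae
    filter_upwards with t ht
    rw [Set.uIoc_of_le hThT] at ht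
    simp only [hu₂ t ht, Matrix.mulVec_mulVec, Matrix.mul_assoc]
  rw [e1, e2, ← Matrix.add_mulVec, ← hG, hv, Matrix.mulVec_mulVec,
    Matrix.mul_nonsing_inv G ((Matrix.isUnit_iff_isUnit_det G).mp hGunit), Matrix.one_mulVec]
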